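/- Let I ⊂ ℝ be a finite interval with |I| = 1 and k : I × I → ℝ measurable with 0 < k₀ ≤ k(ξ,η) ≤ k₁, and k̄(ξ) = ∫_I k(ξ,η) dη. If μ ∈ ℂ is an eigenvalue of the operator Λf(ξ) = ∫_I (k(ξ,η)/k̄(ξ)) f(η) dη on L²(I) with |μ| ≥ 1, then |μ| = 1. Consequently the spectral radius of Λ equals 1. -/

import Mathlib

open MeasureTheory Filter

/-- Any eigenvalue μ of the normalized kernel operator Λ on L²(I) with |μ| ≥ 1
satisfies |μ| = 1; hence the spectral radius of Λ equals 1. -/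
theorem stmt2 (I : Set ℝ) (hI : MeasurableSet I) (hvol : volume I = 1)
    (k : ℝ → ℝ → ℝ) (k₀ k₁ : ℝ) (hk₀ : 0 < k₀) (hk01 : k₀ < k₁)
    (hmeas : Measurable (Function.uncurry k))
    (hbound : ∀ ξ ∈ I, ∀ η ∈ I, k₀ ≤ k ξ η ∧ k ξ η ≤ k₁)
    (μ : ℂ) (hμ : 1 ≤ ‖μ‖)
    (φ : ℝ → ℂ) (hφ2 : MemLp φ 2 (volume.restrict I))
    (hnz : ¬ (∀ᵐ ξ ∂(volume.restrict I), φ ξ = 0))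
    (heig : ∀ᵐ ξ ∂(volume.restrict I),
      μ * φ ξ = ∫ η in I, (↑(k ξ η / ∫ η' in I, k ξ η') : ℂ) * φ η) :
    ‖μ‖ = 1 := by
  have hr0 : (0:ℝ) < ‖μ‖ := lt_of_lt_of_le one_pos hμ
  set r := ‖μ‖ with hrdef
  haveI : IsFiniteMeasure (volume.restrict I) := by
    constructor
    rw [Measure.restrict_apply_univ, hvol]
    exact ENNReal.one_lt_top
  have hφ1 : Integrable φ (volume.restrict I) :=
    hφ2.integrable (by norm_num)
  have hk1pos : (0:ℝ) < k₁ := lt_trans hk₀ hk01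
  -- measurability and integrability of the slices of k
  have hmk : ∀ ξ : ℝ, Measurable (k ξ) := fun ξ =>
    hmeas.comp (measurable_prodMk_left (x := ξ))
  have hintk : ∀ ξ ∈ I, Integrable (k ξ) (volume.restrict I) := by
    intro ξ hξ
    refine ⟨(hmk ξ).aestronglyMeasurable, HasFiniteIntegral.of_bounded (C := k₁) ?_⟩
    filter_upwards [ae_restrict_mem hI] with η hη
    have h := hbound ξ hξ η hη
    rw [Real.norm_eq_abs, abs_of_pos (lt_of_lt_of_le hk₀ h.1)]
    exact h.2
  -- lower bound on k̄(ξ)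
  have hkb : ∀ ξ ∈ I, k₀ ≤ ∫ η in I, k ξ η := by
    intro ξ hξ
    have h0 : (k₀ : ℝ) = ∫ _η in I, k₀ ∂volume := by
      rw [setIntegral_const, measureReal_def, hvol]; simp
    rw [h0]
    exact setIntegral_mono_on
      (integrableOn_const (by rw [hvol]; exact ENNReal.one_ne_top))
      (hintk ξ hξ) hI (fun η hη => (hbound ξ hξ η hη).1)
  -- the integrand of the operator is integrable, with norm equal to (k/k̄)·‖φ‖ a.e.
  have hratio : ∀ ξ ∈ I, ∀ η ∈ I,
      0 ≤ k ξ η / (∫ η' in I, k ξ η') ∧ k ξ η / (∫ η' in I, k ξ η') ≤ k₁ / k₀ := by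
    intro ξ hξ η hη
    have hkbξ := hkb ξ hξ
    have h := hbound ξ hξ η hη
    constructor
    · exact div_nonneg (le_trans hk₀.le h.1) (le_trans hk₀.le hkbξ)
    · exact div_le_div₀ hk1pos.le h.2 hk₀ hkbξ
  have hintprod : ∀ ξ ∈ I,
      Integrable (fun η => (↑(k ξ η / ∫ η' in I, k ξ η') : ℂ) * φ η) (volume.restrict I) := by
    intro ξ hξ
    refine hφ1.bdd_mul (c := k₁ / k₀)
      ((Complex.measurable_ofReal.comp ((hmk ξ).div_const _)).aestronglyMeasurable) ?_
    filter_upwards [ae_restrict_mem hI] with η hη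
    have h := hratio ξ hξ η hη
    rw [Complex.norm_real, Real.norm_eq_abs, abs_of_nonneg h.1]
    exact h.2
  -- main estimate
  have est : ∀ ξ ∈ I, ∀ ψ : ℝ → ℝ, Integrable ψ (volume.restrict I) →
      (∀ᵐ η ∂(volume.restrict I),
        ‖(↑(k ξ η / ∫ η' in I, k ξ η') : ℂ) * φ η‖ ≤ ψ η) →
      ‖∫ η in I, (↑(k ξ η / ∫ η' in I, k ξ η') : ℂ) * φ η‖ ≤ ∫ η in I, ψ η := by
    intro ξ hξ ψ hψint hψ
    calc ‖∫ η in I, (↑(k ξ η / ∫ η' in I, k ξ η') : ℂ) * φ η‖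
        ≤ ∫ η in I, ‖(↑(k ξ η / ∫ η' in I, k ξ η') : ℂ) * φ η‖ :=
          norm_integral_le_integral_norm _
      _ ≤ ∫ η in I, ψ η := integral_mono_ae (hintprod ξ hξ).norm hψint hψ
  -- a.e. pointwise norm of the integrand for η ∈ I
  have hnormeq : ∀ ξ ∈ I, ∀ η,
      ‖(↑(k ξ η / ∫ η' in I, k ξ η') : ℂ) * φ η‖ =
        |k ξ η / ∫ η' in I, k ξ η'| * ‖φ η‖ := by
    intro ξ hξ η
    rw [norm_mul, Complex.norm_real ((k ξ η / ∫ η' in I, k ξ η' : ℝ)),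
      Real.norm_eq_abs]
  -- C : a priori bound
  set C : ℝ := ∫ η in I, (k₁ / k₀) * ‖φ η‖ with hCdef
  have hC0 : 0 ≤ C := by
    apply integral_nonneg
    intro η
    positivity
  -- base case: a.e. ‖φ‖ ≤ C
  have base : ∀ᵐ ξ ∂(volume.restrict I), ‖φ ξ‖ ≤ C := by
    filter_upwards [heig, ae_restrict_mem hI] with ξ hξeig hξI
    have h1 : ‖μ * φ ξ‖ ≤ C := by
      rw [hξeig]
      refine est ξ hξI _ (hφ1.norm.const_mul _) ?_
      filter_upwards [ae_restrict_mem hI] with η hη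
      rw [hnormeq ξ hξI η]
      have h := hratio ξ hξI η hη
      rw [abs_of_nonneg h.1]
      exact mul_le_mul_of_nonneg_right h.2 (norm_nonneg _)
    calc ‖φ ξ‖ ≤ r * ‖φ ξ‖ := le_mul_of_one_le_left (norm_nonneg _) hμ
      _ = ‖μ * φ ξ‖ := by rw [norm_mul]
      _ ≤ C := h1
  -- inductive step: a.e. bound B improves to B / r
  have step : ∀ B : ℝ, 0 ≤ B → (∀ᵐ η ∂(volume.restrict I), ‖φ η‖ ≤ B) →
      ∀ᵐ ξ ∂(volume.restrict I), r * ‖φ ξ‖ ≤ B := by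
    intro B hB hφB
    filter_upwards [heig, ae_restrict_mem hI] with ξ hξeig hξI
    have hkbξ := hkb ξ hξI
    have hkbne : (∫ η' in I, k ξ η') ≠ 0 := ne_of_gt (lt_of_lt_of_le hk₀ hkbξ)
    have h1 : ‖μ * φ ξ‖ ≤ ∫ η in I, k ξ η / (∫ η' in I, k ξ η') * B := by
      rw [hξeig]
      refine est ξ hξI _ (((hintk ξ hξI).div_const _).mul_const B) ?_
      filter_upwards [hφB, ae_restrict_mem hI] with η hηB hη
      rw [hnormeq ξ hξI η]
      have h := hratio ξ hξI η hη
      rw [abs_of_nonneg h.1]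
      exact mul_le_mul_of_nonneg_left hηB h.1
    have h2 : (∫ η in I, k ξ η / (∫ η' in I, k ξ η') * B) = B := by
      have hrw : ∀ η, k ξ η / (∫ η' in I, k ξ η') * B
          = k ξ η * (B / (∫ η' in I, k ξ η')) := by
        intro η; ring
      simp_rw [hrw]
      rw [integral_mul_const, mul_comm, div_mul_cancel₀ _ hkbne]
    calc r * ‖φ ξ‖ = ‖μ * φ ξ‖ := by rw [norm_mul]
      _ ≤ _ := h1
      _ = B := h2
  -- iterate: a.e. ‖φ‖ ≤ C / rⁿ
  have iter : ∀ n : ℕ, ∀ᵐ ξ ∂(volume.restrict I), ‖φ ξ‖ ≤ C / r ^ n := by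
    intro n
    induction n with
    | zero => simpa using base
    | succ n ih =>
      have h := step (C / r ^ n) (div_nonneg hC0 (pow_nonneg hr0.le n)) ih
      filter_upwards [h] with ξ hξ
      rw [pow_succ, ← div_div]
      rw [le_div_iff₀ hr0, mul_comm]
      exact hξ
  -- conclude
  refine le_antisymm ?_ hμ
  by_contra hlt
  push_neg at hlt
  apply hnz
  have hall : ∀ᵐ ξ ∂(volume.restrict I), ∀ n : ℕ, ‖φ ξ‖ ≤ C / r ^ n :=
    ae_all_iff.2 iter
  filter_upwards [hall] with ξ hξ
  have htend : Tendsto (fun n : ℕ => C / r ^ n) atTop (nhds 0) := by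
    have h1 : Tendsto (fun n : ℕ => (r⁻¹) ^ n) atTop (nhds 0) :=
      tendsto_pow_atTop_nhds_zero_of_lt_one (inv_nonneg.2 hr0.le)
        (inv_lt_one_of_one_lt₀ hlt)
    have h2 := h1.const_mul C
    simpa [div_eq_mul_inv, inv_pow] using h2
  have hle0 : ‖φ ξ‖ ≤ 0 := ge_of_tendsto htend (Eventually.of_forall hξ)
  exact norm_le_zero_iff.1 hle0
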